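/- Let q₂ ∈ ℝ, q₄ > 0 with q₄ + 2 > 2q₂, and p > 0. Define for |x| large X_k(x) = |x|^{q₂} e_k (k = 1,...,d) and X_0(x) = -|x|^{q₄} x. Then there exist C(p) > 0 and R₀ > 0 such that for all |x| ≥ R₀: sup_{|y| ≤ 1} ( Σ_{k=1}^d p |X_k(x+y)|² + ⟨x, X_0(x+y)⟩ ) ≤ -C(p)(1 + |x|^{q₄+2}) ≤ C(p)(1+|x|²). -/
import Mathlib


open scoped RealInnerProductSpace

set_option maxHeartbeats 800000 in

theorem stmt_10 (d : ℕ) (hd : 1 ≤ d) (q₂ q₄ p : ℝ) (hq₄ : 0 < q₄)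
    (hq : 2 * q₂ < q₄ + 2) (hp : 0 < p)
    (X : Fin d → EuclideanSpace ℝ (Fin d) → EuclideanSpace ℝ (Fin d))
    (X0 : EuclideanSpace ℝ (Fin d) → EuclideanSpace ℝ (Fin d))
    (hX : ∀ k x, X k x = (‖x‖ ^ q₂) • EuclideanSpace.single k (1 : ℝ))
    (hX0 : ∀ x, X0 x = -(‖x‖ ^ q₄) • x) :
    ∃ Cp > (0 : ℝ), ∃ R₀ > (0 : ℝ), ∀ x : EuclideanSpace ℝ (Fin d), R₀ ≤ ‖x‖ →
      (∀ y : EuclideanSpace ℝ (Fin d), ‖y‖ ≤ 1 →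
        (∑ k : Fin d, p * ‖X k (x + y)‖ ^ 2) + ⟪x, X0 (x + y)⟫
          ≤ -Cp * (1 + ‖x‖ ^ (q₄ + 2))) ∧
      -Cp * (1 + ‖x‖ ^ (q₄ + 2)) ≤ Cp * (1 + ‖x‖ ^ (2 : ℝ)) := by
  have hd0 : (0 : ℝ) < d := by exact_mod_cast Nat.lt_of_lt_of_le Nat.zero_lt_one hd
  obtain ⟨ε, hεdef⟩ : ∃ ε : ℝ, ε = q₄ + 2 - 2 * q₂ := ⟨_, rfl⟩
  have hε : 0 < ε := by rw [hεdef]; linarith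
  obtain ⟨B, hBdef⟩ : ∃ B : ℝ, B = (2 : ℝ) ^ |q₂| := ⟨_, rfl⟩
  have hB : 0 < B := hBdef ▸ Real.rpow_pos_of_pos (by norm_num) _
  obtain ⟨A, hAdef⟩ : ∃ A : ℝ, A = (d : ℝ) * p * B ^ 2 := ⟨_, rfl⟩
  have hA : 0 < A := by rw [hAdef]; positivity
  obtain ⟨K, hKdef⟩ : ∃ K : ℝ, K = (2 : ℝ) ^ q₄ * 2 := ⟨_, rfl⟩
  have hK : 0 < K := by
    have := Real.rpow_pos_of_pos (show (0:ℝ) < 2 by norm_num) q₄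
    rw [hKdef]; positivity
  refine ⟨1 / (4 * K), by positivity, max 2 ((max 1 (2 * K * A)) ^ (1 / ε)),
    lt_of_lt_of_le two_pos (le_max_left _ _), ?_⟩
  intro x hx
  have hx2 : (2 : ℝ) ≤ ‖x‖ := le_trans (le_max_left _ _) hx
  have hx0 : (0 : ℝ) < ‖x‖ := by linarith
  have hT1 : (1 : ℝ) ≤ ‖x‖ ^ (q₄ + 2) := by
    calc (1 : ℝ) = (1 : ℝ) ^ (q₄ + 2) := (Real.one_rpow _).symm
      _ ≤ ‖x‖ ^ (q₄ + 2) := Real.rpow_le_rpow (by norm_num) (by linarith) (by linarith)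
  have hT0 : (0 : ℝ) ≤ ‖x‖ ^ (q₄ + 2) := by linarith
  have hxε : 2 * K * A ≤ ‖x‖ ^ ε := by
    have h0 : (0 : ℝ) ≤ max 1 (2 * K * A) := le_trans zero_le_one (le_max_left _ _)
    have h1 : (max 1 (2 * K * A)) ^ (1 / ε) ≤ ‖x‖ := le_trans (le_max_right _ _) hx
    have h2 : ((max 1 (2 * K * A)) ^ (1 / ε)) ^ ε ≤ ‖x‖ ^ ε :=
      Real.rpow_le_rpow (Real.rpow_nonneg h0 _) h1 hε.le
    rw [← Real.rpow_mul h0, one_div, inv_mul_cancel₀ hε.ne', Real.rpow_one] at h2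
    exact le_trans (le_max_right _ _) h2
  have hmain : A * ‖x‖ ^ (2 * q₂) ≤ ‖x‖ ^ (q₄ + 2) / (2 * K) := by
    have hsplit : ‖x‖ ^ (q₄ + 2) = ‖x‖ ^ (2 * q₂) * ‖x‖ ^ ε := by
      rw [← Real.rpow_add hx0, hεdef]; ring_nf
    have hS : (0 : ℝ) < ‖x‖ ^ (2 * q₂) := Real.rpow_pos_of_pos hx0 _
    rw [hsplit, le_div_iff₀ (by positivity)]
    calc A * ‖x‖ ^ (2 * q₂) * (2 * K) = ‖x‖ ^ (2 * q₂) * (2 * K * A) := by ring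
      _ ≤ ‖x‖ ^ (2 * q₂) * ‖x‖ ^ ε := mul_le_mul_of_nonneg_left hxε hS.le
  constructor
  · intro y hy
    have hy0 : ‖x‖ ≤ ‖x + y‖ + ‖y‖ := by
      simpa using norm_add_le (x + y) (-y)
    have hlo : ‖x‖ / 2 ≤ ‖x + y‖ := by linarith
    have hhi : ‖x + y‖ ≤ 2 * ‖x‖ := le_trans (norm_add_le x y) (by linarith)
    have hq2bound : ‖x + y‖ ^ q₂ ≤ B * ‖x‖ ^ q₂ := by
      rcases le_or_gt 0 q₂ with h | h
      · calc ‖x + y‖ ^ q₂ ≤ (2 * ‖x‖) ^ q₂ := Real.rpow_le_rpow (norm_nonneg _) hhi h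
          _ = (2 : ℝ) ^ q₂ * ‖x‖ ^ q₂ := Real.mul_rpow (by norm_num) (norm_nonneg _)
          _ ≤ B * ‖x‖ ^ q₂ := by
              have hb : (2 : ℝ) ^ q₂ ≤ B := by
                rw [hBdef]
                exact (Real.rpow_le_rpow_left_iff (by norm_num)).mpr (le_abs_self _)
              exact mul_le_mul_of_nonneg_right hb (Real.rpow_nonneg (norm_nonneg _) _)
      · calc ‖x + y‖ ^ q₂ ≤ (‖x‖ / 2) ^ q₂ :=
            Real.rpow_le_rpow_of_nonpos (by linarith) hlo h.le
          _ = ‖x‖ ^ q₂ / (2 : ℝ) ^ q₂ :=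
            Real.div_rpow (norm_nonneg x) (by norm_num : (0:ℝ) ≤ 2) q₂
          _ = (2 : ℝ) ^ (-q₂) * ‖x‖ ^ q₂ := by
              rw [Real.rpow_neg (by norm_num : (0:ℝ) ≤ 2)]
              field_simp
          _ ≤ B * ‖x‖ ^ q₂ := by
              have hb : (2 : ℝ) ^ (-q₂) ≤ B := by
                rw [hBdef]
                exact (Real.rpow_le_rpow_left_iff (by norm_num)).mpr (neg_le_abs _)
              exact mul_le_mul_of_nonneg_right hb (Real.rpow_nonneg (norm_nonneg _) _)
    have hsum : (∑ k : Fin d, p * ‖X k (x + y)‖ ^ 2) ≤ A * ‖x‖ ^ (2 * q₂) := by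
      have hnorm : ∀ k : Fin d, ‖X k (x + y)‖ = ‖x + y‖ ^ q₂ := by
        intro k
        simp [hX, norm_smul, EuclideanSpace.norm_single,
          abs_of_nonneg (Real.rpow_nonneg (norm_nonneg (x + y)) q₂)]
      have hsq : (‖x + y‖ ^ q₂) ^ 2 ≤ B ^ 2 * ‖x‖ ^ (2 * q₂) := by
        calc (‖x + y‖ ^ q₂) ^ 2 ≤ (B * ‖x‖ ^ q₂) ^ 2 :=
              pow_le_pow_left₀ (Real.rpow_nonneg (norm_nonneg _) _) hq2bound 2
          _ = B ^ 2 * (‖x‖ ^ q₂) ^ 2 := by ring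
          _ = B ^ 2 * ‖x‖ ^ (2 * q₂) := by
              congr 1
              rw [← Real.rpow_natCast (‖x‖ ^ q₂) 2, ← Real.rpow_mul (norm_nonneg _)]
              congr 1
              push_cast
              ring
      calc (∑ k : Fin d, p * ‖X k (x + y)‖ ^ 2)
          = (d : ℝ) * (p * (‖x + y‖ ^ q₂) ^ 2) := by
            simp [hnorm, Finset.sum_const, Finset.card_univ, mul_comm]
        _ ≤ (d : ℝ) * (p * (B ^ 2 * ‖x‖ ^ (2 * q₂))) :=
            mul_le_mul_of_nonneg_left (mul_le_mul_of_nonneg_left hsq hp.le) hd0.le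
        _ = A * ‖x‖ ^ (2 * q₂) := by rw [hAdef]; ring
    have hinner : ⟪x, X0 (x + y)⟫ ≤ -(‖x‖ ^ (q₄ + 2) / K) := by
      have hrw : ⟪x, X0 (x + y)⟫ = -(‖x + y‖ ^ q₄ * ⟪x, x + y⟫) := by
        rw [hX0, neg_smul, inner_neg_right, real_inner_smul_right]
      have hinn_lb : ‖x‖ * ‖x‖ / 2 ≤ ⟪x, x + y⟫ := by
        have h1 : ⟪x, (x + y : EuclideanSpace ℝ (Fin d))⟫ = ‖x‖ * ‖x‖ + ⟪x, y⟫ := by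
          rw [inner_add_right, real_inner_self_eq_norm_mul_norm]
        have h2 : |⟪x, (y : EuclideanSpace ℝ (Fin d))⟫| ≤ ‖x‖ * ‖y‖ :=
          abs_real_inner_le_norm x y
        have h3 : ‖x‖ * ‖y‖ ≤ ‖x‖ := by nlinarith [norm_nonneg y]
        have h4 := abs_le.mp h2
        nlinarith
      have hpow_lb : (‖x‖ / 2) ^ q₄ ≤ ‖x + y‖ ^ q₄ :=
        Real.rpow_le_rpow (by positivity) hlo hq₄.le
      have hprod : (‖x‖ / 2) ^ q₄ * (‖x‖ * ‖x‖ / 2) ≤ ‖x + y‖ ^ q₄ * ⟪x, x + y⟫ :=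
        mul_le_mul hpow_lb hinn_lb (by positivity) (Real.rpow_nonneg (norm_nonneg _) _)
      have heq : (‖x‖ / 2) ^ q₄ * (‖x‖ * ‖x‖ / 2) = ‖x‖ ^ (q₄ + 2) / K := by
        have hsp : ‖x‖ ^ (q₄ + 2) = ‖x‖ ^ q₄ * (‖x‖ * ‖x‖) := by
          rw [show (q₄ + 2 : ℝ) = q₄ + ((2:ℕ):ℝ) by push_cast; ring,
            Real.rpow_add hx0, Real.rpow_natCast]
          ring
        rw [Real.div_rpow (norm_nonneg x) (by norm_num : (0:ℝ) ≤ 2) q₄, hsp, hKdef]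
        exact div_mul_div_comm _ _ _ _
      rw [hrw, ← heq]
      exact neg_le_neg hprod
    have hconc : -(‖x‖ ^ (q₄ + 2) / (2 * K)) ≤
        -(1 / (4 * K)) * (1 + ‖x‖ ^ (q₄ + 2)) := by
      have hnn : (0:ℝ) ≤ (‖x‖ ^ (q₄ + 2) - 1) / (4 * K) :=
        div_nonneg (by linarith) (by positivity)
      have hid : -(1 / (4 * K)) * (1 + ‖x‖ ^ (q₄ + 2)) =
          -(‖x‖ ^ (q₄ + 2) / (2 * K)) + (‖x‖ ^ (q₄ + 2) - 1) / (4 * K) := by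
        have hgen : ∀ a k : ℝ, k ≠ 0 →
            -(1 / (4 * k)) * (1 + a) = -(a / (2 * k)) + (a - 1) / (4 * k) := by
          intro a k hk
          field_simp
          ring
        exact hgen _ _ hK.ne'
      rw [hid]
      linarith
    calc (∑ k : Fin d, p * ‖X k (x + y)‖ ^ 2) + ⟪x, X0 (x + y)⟫
        ≤ A * ‖x‖ ^ (2 * q₂) + -(‖x‖ ^ (q₄ + 2) / K) := add_le_add hsum hinner
      _ ≤ ‖x‖ ^ (q₄ + 2) / (2 * K) + -(‖x‖ ^ (q₄ + 2) / K) := by linarith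
      _ = -(‖x‖ ^ (q₄ + 2) / (2 * K)) := by
          have hgen : ∀ a k : ℝ, k ≠ 0 → a / (2 * k) + -(a / k) = -(a / (2 * k)) := by
            intro a k hk
            field_simp
            ring
          exact hgen _ _ hK.ne'
      _ ≤ -(1 / (4 * K)) * (1 + ‖x‖ ^ (q₄ + 2)) := hconc
  · have h20 : (0:ℝ) ≤ ‖x‖ ^ (2:ℝ) := Real.rpow_nonneg (norm_nonneg _) _
    have hCp : (0:ℝ) < 1 / (4 * K) := by positivity
    have l1 : -(1 / (4 * K)) * (1 + ‖x‖ ^ (q₄ + 2)) ≤ 0 := by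
      have := mul_nonneg hCp.le (show (0:ℝ) ≤ 1 + ‖x‖ ^ (q₄ + 2) by linarith)
      linarith
    have l2 : (0:ℝ) ≤ 1 / (4 * K) * (1 + ‖x‖ ^ (2:ℝ)) :=
      mul_nonneg hCp.le (by linarith)
    linarith
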